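/- arXiv:1701.08952 — 4 statements merged into one kernel-verified Lean document; each statement's English description precedes it below -/
import Mathlib

section
/- Let Σ=(X,𝒰,φ) be a forward complete control system and assume there exists a non-coercive ISS Lyapunov function for Σ. Then Σ has the uniform limit property (ULIM). -/
open Set Filter

/-- Class `K`: continuous, strictly increasing on `[0,∞)` and vanishing at `0`. -/
def ClassK (γ : ℝ → ℝ) : Prop :=
  ContinuousOn γ (Ici 0) ∧ StrictMonoOn γ (Ici 0) ∧ γ 0 = 0

/-- Class `K∞`: class `K` and unbounded. -/
def ClassKinf (γ : ℝ → ℝ) : Prop :=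
  ClassK γ ∧ ∀ c : ℝ, ∃ r : ℝ, 0 ≤ r ∧ c ≤ γ r

/-- The class `K∞ ∪ {0}`. -/
def ClassKinf0 (γ : ℝ → ℝ) : Prop :=
  ClassKinf γ ∨ ∀ r : ℝ, 0 ≤ r → γ r = 0

/-- The class `K ∪ {0}`. -/
def ClassK0 (γ : ℝ → ℝ) : Prop :=
  ClassK γ ∨ ∀ r : ℝ, 0 ≤ r → γ r = 0

/-- Class `L`: continuous, strictly decreasing on `[0,∞)` with limit `0` at infinity. -/
def ClassL (γ : ℝ → ℝ) : Prop :=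
  ContinuousOn γ (Ici 0) ∧ StrictAntiOn γ (Ici 0) ∧ Tendsto γ atTop (nhds 0)

/-- Class `KL`. -/
def ClassKL (β : ℝ → ℝ → ℝ) : Prop :=
  ContinuousOn (fun p : ℝ × ℝ => β p.1 p.2) ((Ici 0) ×ˢ (Ici 0)) ∧
  (∀ t : ℝ, 0 ≤ t → ClassK (fun r => β r t)) ∧
  ∀ r : ℝ, 0 < r → StrictAntiOn (β r) (Ici 0) ∧ Tendsto (β r) atTop (nhds 0)

/-- A forward complete control system `Σ = (X, 𝒰, φ)`: inputs are functions
`u : ℝ₊ → U` (modelled as functions on `ℝ`, with only `t ≥ 0` relevant);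
the set `inputs` of admissible inputs carries a norm `Unorm`, is shift invariant and
closed under concatenation; the transition map `phi` satisfies the identity property,
causality, continuity in time and the cocycle property. -/
structure ControlSystem (X U : Type*) [NormedAddCommGroup X] [NormedSpace ℝ X] [Zero U] where
  /-- the set of admissible input functions -/
  inputs : Set (ℝ → U)
  /-- the norm of the input space -/
  Unorm : (ℝ → U) → ℝ
  Unorm_nonneg : ∀ u, 0 ≤ Unorm u
  /-- the zero input is admissible -/
  zero_mem : (fun _ : ℝ => (0 : U)) ∈ inputs
  Unorm_zero : Unorm (fun _ : ℝ => (0 : U)) = 0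
  /-- the transition map `φ(t,x,u)` -/
  phi : ℝ → X → (ℝ → U) → X
  /-- axiom of shift invariance -/
  shift_mem : ∀ u ∈ inputs, ∀ τ : ℝ, 0 ≤ τ → (fun s => u (s + τ)) ∈ inputs
  shift_norm : ∀ u ∈ inputs, ∀ τ : ℝ, 0 ≤ τ → Unorm (fun s => u (s + τ)) ≤ Unorm u
  /-- axiom of concatenation -/
  concat_mem : ∀ u₁ ∈ inputs, ∀ u₂ ∈ inputs, ∀ t : ℝ, 0 < t →
    (fun s => if s ≤ t then u₁ s else u₂ (s - t)) ∈ inputs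
  /-- identity property -/
  identity : ∀ x u, phi 0 x u = x
  /-- causality -/
  causality : ∀ t : ℝ, 0 ≤ t → ∀ x : X, ∀ u ∈ inputs, ∀ v ∈ inputs,
    (∀ s ∈ Icc (0:ℝ) t, u s = v s) → phi t x u = phi t x v
  /-- continuity of trajectories -/
  cont : ∀ x : X, ∀ u ∈ inputs, ContinuousOn (fun t => phi t x u) (Ici 0)
  /-- cocycle property -/
  cocycle : ∀ t : ℝ, 0 ≤ t → ∀ h : ℝ, 0 ≤ h → ∀ x : X, ∀ u ∈ inputs,
    phi h (phi t x u) (fun s => u (s + t)) = phi (t + h) x u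

namespace ControlSystem

variable {X U : Type*} [NormedAddCommGroup X] [NormedSpace ℝ X] [Zero U]

/-- the zero input -/
def zeroIn : ℝ → U := fun _ => 0

/-- Uniform limit property. -/
def ULIM (S : ControlSystem X U) : Prop :=
  ∃ γ, ClassK0 γ ∧
    ∀ ε : ℝ, 0 < ε → ∀ r : ℝ, 0 < r → ∃ τ : ℝ, 0 ≤ τ ∧
      ∀ x : X, ‖x‖ ≤ r → ∀ u ∈ S.inputs, ∃ t ∈ Icc (0:ℝ) τ,
        ‖S.phi t x u‖ ≤ ε + γ (S.Unorm u)

/-- The (generalized) Dini derivative of `V` along the trajectories of the system: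
`limsup_{t → 0⁺} (V(φ(t,x,u)) - V(x))/t`, computed in the extended reals. -/
noncomputable def DiniLimsup (S : ControlSystem X U) (V : X → ℝ) (x : X) (u : ℝ → U) : EReal :=
  Filter.limsup (fun t : ℝ => (((V (S.phi t x u) - V x) / t : ℝ) : EReal))
    (nhdsWithin (0:ℝ) (Ioi 0))

/-- A non-coercive ISS Lyapunov function. -/
def NonCoerciveISSLyapunov (S : ControlSystem X U) (V : X → ℝ) : Prop :=
  Continuous V ∧ (∀ x : X, 0 ≤ V x) ∧
  ∃ ψ₂ α σ, ClassKinf ψ₂ ∧ ClassKinf α ∧ ClassK σ ∧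
    (∀ x : X, x ≠ 0 → 0 < V x) ∧ (∀ x : X, V x ≤ ψ₂ ‖x‖) ∧
    ∀ x : X, ∀ u ∈ S.inputs,
      S.DiniLimsup V x u ≤ ((-α ‖x‖ + σ (S.Unorm u) : ℝ) : EReal)



open Topology
/-- Auxiliary: given `α ∈ K∞` and `σ ∈ K`, there is `γ ∈ K` with
`γ s ≥ 0` and `α (γ s) = 2 σ s` for all `s ≥ 0`. -/
lemma exists_gain (α σ : ℝ → ℝ) (hα : ClassKinf α) (hσ : ClassK σ) :
    ∃ γ : ℝ → ℝ, ClassK γ ∧ ∀ s : ℝ, 0 ≤ s → 0 ≤ γ s ∧ α (γ s) = 2 * σ s := by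
  obtain ⟨⟨hαc, hαm, hα0⟩, hαu⟩ := hα
  obtain ⟨hσc, hσm, hσ0⟩ := hσ
  have hαnn : ∀ r : ℝ, 0 ≤ r → 0 ≤ α r := fun r hr => by
    have := hαm.monotoneOn (self_mem_Ici) (mem_Ici.2 hr) hr
    rwa [hα0] at this
  have hσnn : ∀ s : ℝ, 0 ≤ s → 0 ≤ σ s := fun s hs => by
    have := hσm.monotoneOn (self_mem_Ici) (mem_Ici.2 hs) hs
    rwa [hσ0] at this
  have hsurj : ∀ y : ℝ, 0 ≤ y → ∃ r, 0 ≤ r ∧ α r = y := by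
    intro y hy
    obtain ⟨R, hR0, hRy⟩ := hαu y
    have hmem : y ∈ Icc (α 0) (α R) := by rw [hα0]; exact ⟨hy, hRy⟩
    obtain ⟨r, hr, hry⟩ := intermediate_value_Icc hR0 (hαc.mono Icc_subset_Ici_self) hmem
    exact ⟨r, hr.1, hry⟩
  classical
  set ainv : ℝ → ℝ := fun y => if hy : 0 ≤ y then (hsurj y hy).choose else 0 with hainv
  have hinv1 : ∀ y : ℝ, 0 ≤ y → 0 ≤ ainv y ∧ α (ainv y) = y := by
    intro y hy
    simp only [hainv, dif_pos hy]
    exact ⟨(hsurj y hy).choose_spec.1, (hsurj y hy).choose_spec.2⟩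
  have hleft : ∀ r : ℝ, 0 ≤ r → ainv (α r) = r := by
    intro r hr
    exact hαm.injOn (mem_Ici.2 (hinv1 _ (hαnn r hr)).1) (mem_Ici.2 hr)
      (hinv1 _ (hαnn r hr)).2
  have hinvm : StrictMonoOn ainv (Ici 0) := by
    intro y1 h1 y2 h2 h12
    rcases lt_or_ge (ainv y1) (ainv y2) with h | h
    · exact h
    · exfalso
      have := hαm.monotoneOn (mem_Ici.2 (hinv1 y2 (mem_Ici.1 h2)).1)
        (mem_Ici.2 (hinv1 y1 (mem_Ici.1 h1)).1) h
      rw [(hinv1 y1 (mem_Ici.1 h1)).2, (hinv1 y2 (mem_Ici.1 h2)).2] at this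
      exact absurd h12 (not_lt.2 this)
  have hainv0 : ainv 0 = 0 := by
    have := hleft 0 le_rfl
    rwa [hα0] at this
  have himg : ainv '' (Ici 0) = Ici 0 := by
    apply subset_antisymm
    · rintro y ⟨z, hz, rfl⟩
      exact mem_Ici.2 (hinv1 z (mem_Ici.1 hz)).1
    · intro r hr
      exact ⟨α r, mem_Ici.2 (hαnn r (mem_Ici.1 hr)), hleft r (mem_Ici.1 hr)⟩
  have hinvc : ContinuousOn ainv (Ici 0) := by
    intro y hy
    rcases eq_or_lt_of_le (mem_Ici.1 hy) with h0 | h0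
    · have : ContinuousWithinAt ainv (Ici (0:ℝ)) 0 := by
        apply hinvm.continuousWithinAt_right_of_surjOn self_mem_nhdsWithin
        intro z hz
        rw [hainv0] at hz
        exact ⟨α z, mem_Ici.2 (hαnn z (le_of_lt hz)), hleft z (le_of_lt hz)⟩
      rw [← h0]
      exact this
    · have hky : 0 < ainv y := by
        have := hinvm self_mem_Ici hy h0
        rwa [hainv0] at this
      refine (hinvm.continuousAt_of_image_mem_nhds (Ici_mem_nhds h0) ?_).continuousWithinAt
      rw [himg]
      exact Ici_mem_nhds hky
  refine ⟨fun s => ainv (2 * σ s), ⟨?_, ?_, ?_⟩, ?_⟩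
  · exact hinvc.comp (continuousOn_const.mul hσc)
      (fun s hs => mem_Ici.2 (by have := hσnn s (mem_Ici.1 hs); linarith))
  · intro s1 h1 s2 h2 h12
    exact hinvm (mem_Ici.2 (by have := hσnn s1 (mem_Ici.1 h1); linarith))
      (mem_Ici.2 (by have := hσnn s2 (mem_Ici.1 h2); linarith))
      (by have := hσm h1 h2 h12; linarith)
  · show ainv (2 * σ 0) = 0
    rw [hσ0, mul_zero, hainv0]
  · intro s hs
    have h2σ : (0:ℝ) ≤ 2 * σ s := by have := hσnn s hs; linarith
    exact ⟨(hinv1 _ h2σ).1, (hinv1 _ h2σ).2⟩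

/-- If a forward complete control system possesses a non-coercive ISS Lyapunov function,
then it has the uniform limit property. -/
theorem ULIM_of_nonCoerciveISSLyapunov (S : ControlSystem X U) (V : X → ℝ)
    (h : S.NonCoerciveISSLyapunov V) : S.ULIM := by
  obtain ⟨hVc, hVnn, ψ₂, α, σ, hψ, hα, hσ, hVpos, hVle, hdecay⟩ := h
  obtain ⟨γ, hγK, hγspec⟩ := exists_gain α σ hα hσ
  refine ⟨γ, Or.inl hγK, ?_⟩
  intro ε hε r hr
  have hαm := hα.1.2.1
  have hα0 := hα.1.2.2
  have hc : 0 < α ε := by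
    have := hαm self_mem_Ici (mem_Ici.2 hε.le) hε
    rwa [hα0] at this
  have hψm := hψ.1.2.1
  have hψ0 := hψ.1.2.2
  have hψrnn : 0 ≤ ψ₂ r := by
    have := hψm.monotoneOn self_mem_Ici (mem_Ici.2 hr.le) hr.le
    rwa [hψ0] at this
  set c := α ε with hcdef
  refine ⟨2 * (ψ₂ r + 1) / c, by positivity, ?_⟩
  intro x hxr u hu
  by_contra hcon
  push_neg at hcon
  set τ := 2 * (ψ₂ r + 1) / c with hτdef
  have hτ : 0 ≤ τ := by positivity
  set W : ℝ → ℝ := fun t => V (S.phi t x u) with hWdef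
  have hWcont : ContinuousOn W (Icc 0 τ) :=
    hVc.comp_continuousOn ((S.cont x u hu).mono Icc_subset_Ici_self)
  have key : ∀ t ∈ Icc (0:ℝ) τ, W t ≤ W 0 - c / 2 * t := by
    apply image_le_of_liminf_slope_right_le_deriv_boundary (B' := fun _ => -(c/2)) hWcont
      (by simp [hWdef]) (continuousOn_const.sub (continuousOn_const.mul continuousOn_id))
    · intro t _
      have hd : HasDerivAt (fun y : ℝ => W 0 - c / 2 * y) (-(c/2)) t := by
        simpa using ((hasDerivAt_id t).const_mul (c/2)).const_sub (W 0)
      exact hd.hasDerivWithinAt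
    · intro t ht ρ hρ
      set xt := S.phi t x u with hxt
      set ut : ℝ → U := fun s => u (s + t) with hut
      have hutm : ut ∈ S.inputs := S.shift_mem u hu t ht.1
      have hxtn : ε + γ (S.Unorm u) < ‖xt‖ := hcon t ⟨ht.1, ht.2.le⟩
      have hγn := hγspec (S.Unorm u) (S.Unorm_nonneg u)
      have hxtn0 : (0:ℝ) ≤ ‖xt‖ := norm_nonneg _
      have h1 : c ≤ α ‖xt‖ :=
        hαm.monotoneOn (mem_Ici.2 hε.le) (mem_Ici.2 hxtn0) (by linarith [hγn.1])
      have hσut : σ (S.Unorm ut) ≤ σ (S.Unorm u) :=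
        hσ.2.1.monotoneOn (mem_Ici.2 (S.Unorm_nonneg ut)) (mem_Ici.2 (S.Unorm_nonneg u))
          (S.shift_norm u hu t ht.1)
      have h2 : 2 * σ (S.Unorm u) ≤ α ‖xt‖ := by
        rw [← hγn.2]
        exact hαm.monotoneOn (mem_Ici.2 hγn.1) (mem_Ici.2 hxtn0) (by linarith)
      have hbound : -α ‖xt‖ + σ (S.Unorm ut) ≤ -(c/2) := by linarith
      have hdlim : S.DiniLimsup V xt ut ≤ ((-(c/2) : ℝ) : EReal) :=
        (hdecay xt ut hutm).trans (by exact_mod_cast hbound)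
      have heq : S.DiniLimsup V xt ut
          = Filter.limsup (fun h : ℝ => (((W (t + h) - W t) / h : ℝ) : EReal)) (𝓝[>] (0:ℝ)) := by
        apply Filter.limsup_congr
        filter_upwards [self_mem_nhdsWithin] with h hh
        have hcox := S.cocycle t ht.1 h (le_of_lt hh) x u hu
        simp only [hWdef, hxt, hut]
        rw [hcox]
      have hlt : Filter.limsup (fun h : ℝ => (((W (t + h) - W t) / h : ℝ) : EReal)) (𝓝[>] (0:ℝ))
          < ((ρ : ℝ) : EReal) := by
        rw [← heq]
        exact lt_of_le_of_lt hdlim (by exact_mod_cast hρ)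
      have hev := Filter.eventually_lt_of_limsup_lt hlt
      have hmap : Filter.map (fun h : ℝ => t + h) (𝓝[>] (0:ℝ)) = 𝓝[>] t := by
        have := (Homeomorph.addLeft t).isEmbedding.map_nhdsWithin_eq (Ioi (0:ℝ)) 0
        simpa [image_const_add_Ioi] using this
      apply Filter.Eventually.frequently
      rw [← hmap, Filter.eventually_map]
      filter_upwards [hev, self_mem_nhdsWithin] with h hh hh0
      have hne : t + h - t = h := by ring
      rw [slope_def_field, hne]
      exact_mod_cast hh
  have hfin := key τ ⟨hτ, le_rfl⟩
  have hW0 : W 0 ≤ ψ₂ r := by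
    have h0 : W 0 = V x := by simp [hWdef, S.identity]
    rw [h0]
    exact (hVle x).trans (hψm.monotoneOn (mem_Ici.2 (norm_nonneg x))
      (mem_Ici.2 ((norm_nonneg x).trans hxr)) hxr)
  have hWτ : 0 ≤ W τ := hVnn _
  have hcτ : c / 2 * τ = ψ₂ r + 1 := by
    rw [hτdef]; field_simp
  linarith


end ControlSystem
end

section
/- Consider the semilinear evolution equation ẋ(t)=Ax(t)+f(x(t),u(t)) on a Banach space X with mild solutions. If Assumption 1 holds and the system has bounded reachability sets (BRS), then the flow is continuous at the equilibrium (CEP): for every ε>0 and every h>0 there exists δ>0 such that t∈[0,h], ‖x‖_X≤δ and ‖u‖_𝒰≤δ imply ‖φ(t,x,u)‖_X ≤ ε. -/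
open Set Filter

/-- A strongly continuous semigroup of bounded linear operators on `X`. -/
structure C0Semigroup (X : Type*) [NormedAddCommGroup X] [NormedSpace ℝ X] where
  /-- the semigroup operators -/
  T : ℝ → X →L[ℝ] X
  map_zero' : T 0 = ContinuousLinearMap.id ℝ X
  semigroup' : ∀ s : ℝ, 0 ≤ s → ∀ t : ℝ, 0 ≤ t → T (s + t) = (T s).comp (T t)
  strong_cont : ∀ x : X, ContinuousOn (fun t => T t x) (Ici 0)

variable {X U : Type*} [NormedAddCommGroup X] [NormedSpace ℝ X] [CompleteSpace X]
  [NormedAddCommGroup U] [NormedSpace ℝ U]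

/-- A member of `PC(ℝ₊, U)`: a globally bounded, piecewise continuous,
right-continuous input function (modelled on `ℝ`, only `t ≥ 0` relevant). -/
def PCin (u : ℝ → U) : Prop :=
  (∃ C : ℝ, ∀ t : ℝ, 0 ≤ t → ‖u t‖ ≤ C) ∧
  (∀ t : ℝ, 0 ≤ t → ContinuousWithinAt u (Ici t) t) ∧
  (∀ T : ℝ, 0 < T → ∃ D : Finset ℝ, ∀ t ∈ Icc (0:ℝ) T, t ∉ D →
    ContinuousWithinAt u (Ici 0) t)

/-- The sup-norm of an input: `‖u‖_𝒰 = sup_{t ≥ 0} ‖u(t)‖`. -/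
noncomputable def pcNorm (u : ℝ → U) : ℝ :=
  ⨆ t : Ici (0:ℝ), ‖u t.val‖

/-- The mild-solution property: `φ` assigns to each initial state and each admissible
input the (unique, globally defined) mild solution of `ẋ = Ax + f(x,u)`, i.e.
`x(t) = T(t)x(0) + ∫₀ᵗ T(t-s) f(x(s), u(s)) ds`, which is continuous in time. -/
def IsMildFlow (Tg : C0Semigroup X) (f : X → U → X)
    (φ : ℝ → X → (ℝ → U) → X) : Prop :=
  ∀ (x : X) (u : ℝ → U), PCin u →
    (∀ t : ℝ, 0 ≤ t →
      φ t x u = Tg.T t x + ∫ s in (0:ℝ)..t, Tg.T (t - s) (f (φ s x u) (u s))) ∧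
    ContinuousOn (fun t => φ t x u) (Ici 0)

/-- Assumption 1: `f` is Lipschitz continuous on bounded subsets of `X`, uniformly
with respect to the second argument; `f(x,·)` is continuous and `f(0,0) = 0`. -/
def Assumption1 (f : X → U → X) : Prop :=
  (∀ C : ℝ, 0 < C → ∃ L : ℝ, 0 ≤ L ∧ ∀ x y : X, ‖x‖ ≤ C → ‖y‖ ≤ C → ∀ v : U,
    ‖f x v - f y v‖ ≤ L * ‖x - y‖) ∧
  (∀ x : X, Continuous (f x)) ∧ f 0 0 = 0

/-- Property `◊`: there exist `σ ∈ K` and `r > 0` such that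
`‖f(x,v) - f(x,0)‖ ≤ σ(‖v‖)` for all `‖v‖ < r` and `‖x‖ ≤ r`. -/
def PropertyDiamond (f : X → U → X) : Prop :=
  ∃ σ, ClassK σ ∧ ∃ r : ℝ, 0 < r ∧ ∀ v : U, ‖v‖ < r → ∀ x : X, ‖x‖ ≤ r →
    ‖f x v - f x 0‖ ≤ σ ‖v‖

/-- ISS of the system with flow `φ`. -/
def pISS (φ : ℝ → X → (ℝ → U) → X) : Prop :=
  ∃ β γ, ClassKL β ∧ ClassK γ ∧
    ∀ x : X, ∀ u : ℝ → U, PCin u → ∀ t : ℝ, 0 ≤ t →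
      ‖φ t x u‖ ≤ β ‖x‖ t + γ (pcNorm u)

/-- UAG of the system with flow `φ`. -/
def pUAG (φ : ℝ → X → (ℝ → U) → X) : Prop :=
  ∃ γ, ClassKinf0 γ ∧
    ∀ ε : ℝ, 0 < ε → ∀ r : ℝ, 0 < r → ∃ τ : ℝ, 0 ≤ τ ∧
      ∀ u : ℝ → U, PCin u → ∀ x : X, ‖x‖ < r → ∀ t : ℝ, τ ≤ t →
        ‖φ t x u‖ ≤ ε + γ (pcNorm u)

/-- BRS of the system with flow `φ`. -/
def pBRS (φ : ℝ → X → (ℝ → U) → X) : Prop :=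
  ∀ C : ℝ, 0 < C → ∀ τ : ℝ, 0 < τ → ∃ M : ℝ,
    ∀ x : X, ‖x‖ ≤ C → ∀ u : ℝ → U, PCin u → pcNorm u ≤ C → ∀ t ∈ Icc (0:ℝ) τ,
      ‖φ t x u‖ ≤ M

/-- ULIM of the system with flow `φ`. -/
def pULIM (φ : ℝ → X → (ℝ → U) → X) : Prop :=
  ∃ γ, ClassK0 γ ∧
    ∀ ε : ℝ, 0 < ε → ∀ r : ℝ, 0 < r → ∃ τ : ℝ, 0 ≤ τ ∧
      ∀ x : X, ‖x‖ ≤ r → ∀ u : ℝ → U, PCin u → ∃ t ∈ Icc (0:ℝ) τ,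
        ‖φ t x u‖ ≤ ε + γ (pcNorm u)

/-- ULS of the system with flow `φ`. -/
def pULS (φ : ℝ → X → (ℝ → U) → X) : Prop :=
  ∃ σ γ, ClassKinf σ ∧ ClassKinf0 γ ∧ ∃ r : ℝ, 0 < r ∧
    ∀ t : ℝ, 0 ≤ t → ∀ x : X, ‖x‖ ≤ r → ∀ u : ℝ → U, PCin u → pcNorm u ≤ r →
      ‖φ t x u‖ ≤ σ ‖x‖ + γ (pcNorm u)

/-- UGS of the system with flow `φ`. -/
def pUGS (φ : ℝ → X → (ℝ → U) → X) : Prop :=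
  ∃ σ γ, ClassKinf σ ∧ ClassKinf0 γ ∧
    ∀ t : ℝ, 0 ≤ t → ∀ x : X, ∀ u : ℝ → U, PCin u →
      ‖φ t x u‖ ≤ σ ‖x‖ + γ (pcNorm u)

/-- 0-ULS (uniform local stability of the undisturbed system) with flow `φ`. -/
def pZeroULS (φ : ℝ → X → (ℝ → U) → X) : Prop :=
  ∃ σ, ClassKinf σ ∧ ∃ r : ℝ, 0 < r ∧
    ∀ x : X, ‖x‖ ≤ r → ∀ t : ℝ, 0 ≤ t → ‖φ t x (fun _ => 0)‖ ≤ σ ‖x‖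


lemma gronwall_int {ψ : ℝ → ℝ} (hc : Continuous ψ) (hnn : ∀ s, 0 ≤ ψ s)
    {a K h : ℝ} (ha : 0 ≤ a) (hK : 0 ≤ K)
    (hb : ∀ t ∈ Icc (0:ℝ) h, ψ t ≤ a + K * ∫ s in (0:ℝ)..t, ψ s) :
    ∀ t ∈ Icc (0:ℝ) h, ψ t ≤ a * Real.exp (K * t) := by
  intro t ht
  have hint : ∀ x : ℝ, 0 ≤ x → (0:ℝ) ≤ ∫ s in (0:ℝ)..x, ψ s := fun x hx =>
    intervalIntegral.integral_nonneg hx (fun s _ => hnn s)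
  rcases eq_or_lt_of_le hK with hK0 | hKpos
  · calc ψ t ≤ a + K * ∫ s in (0:ℝ)..t, ψ s := hb t ht
    _ = a := by rw [← hK0]; ring
    _ ≤ a * Real.exp (K * t) := by
        nlinarith [Real.one_le_exp (mul_nonneg hK ht.1)]
  · set g : ℝ → ℝ := fun x => ∫ s in (0:ℝ)..x, ψ s with hgdef
    have hgd : ∀ x : ℝ, HasDerivAt g (ψ x) x := fun x =>
      (hc.integral_hasStrictDerivAt 0 x).hasDerivAt
    have hgc : Continuous g :=
      continuous_iff_continuousAt.2 fun x => (hgd x).continuousAt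
    have key : ∀ x ∈ Icc (0:ℝ) h, ‖g x‖ ≤ gronwallBound 0 K a (x - 0) := by
      apply norm_le_gronwallBound_of_norm_deriv_right_le hgc.continuousOn
        (fun x _ => (hgd x).hasDerivWithinAt)
      · simp [hgdef]
      · intro x hx
        rw [Real.norm_of_nonneg (hnn x), Real.norm_of_nonneg (hint x hx.1)]
        have := hb x ⟨hx.1, le_of_lt hx.2⟩
        linarith
    have hgb := key t ht
    rw [Real.norm_of_nonneg (hint t ht.1), sub_zero,
      gronwallBound_of_K_ne_0 (ne_of_gt hKpos)] at hgb
    have h2 := hb t ht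
    have hKne : K ≠ 0 := ne_of_gt hKpos
    have : a + K * (0 * Real.exp (K * t) + a / K * (Real.exp (K * t) - 1))
        = a * Real.exp (K * t) := by field_simp; ring
    nlinarith [hgb, h2, hKpos]

/-- If Assumption 1 holds and the semilinear evolution equation is BRS, then the flow is
continuous at the equilibrium (CEP). -/
theorem evolution_flow_CEP
    (Tg : C0Semigroup X) (f : X → U → X) (hA1 : Assumption1 f)
    (φ : ℝ → X → (ℝ → U) → X) (hφ : IsMildFlow Tg f φ)
    (hBRS : pBRS φ) :
    ∀ ε : ℝ, 0 < ε → ∀ h : ℝ, 0 < h → ∃ δ : ℝ, 0 < δ ∧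
      ∀ t ∈ Icc (0:ℝ) h, ∀ x : X, ‖x‖ ≤ δ → ∀ u : ℝ → U, PCin u → pcNorm u ≤ δ →
        ‖φ t x u‖ ≤ ε := by
  intro ε hε h hh
  -- uniform bound on the semigroup on [0,h]
  obtain ⟨M0, hM0⟩ : ∃ M0 : ℝ, ∀ i : Icc (0:ℝ) h, ‖Tg.T i.1‖ ≤ M0 := by
    apply banach_steinhaus
    intro x
    obtain ⟨C, hC⟩ := (isCompact_Icc (a := (0:ℝ)) (b := h)).exists_bound_of_continuousOn
      ((Tg.strong_cont x).mono Icc_subset_Ici_self)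
    exact ⟨C, fun i => hC i.1 i.2⟩
  set M := max M0 1 with hMdef
  have hM1 : (1:ℝ) ≤ M := le_max_right _ _
  have hMpos : (0:ℝ) < M := lt_of_lt_of_le one_pos hM1
  have hTle : ∀ t ∈ Icc (0:ℝ) h, ∀ y : X, ‖Tg.T t y‖ ≤ M * ‖y‖ := by
    intro t ht y
    calc ‖Tg.T t y‖ ≤ ‖Tg.T t‖ * ‖y‖ := (Tg.T t).le_opNorm y
    _ ≤ M * ‖y‖ :=
      mul_le_mul_of_nonneg_right ((hM0 ⟨t, ht⟩).trans (le_max_left _ _)) (norm_nonneg y)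
  -- bounded reachability bound for C = 1
  obtain ⟨M₁, hM₁⟩ := hBRS 1 one_pos h hh
  set R := max M₁ 1 with hRdef
  have hRpos : (0:ℝ) < R := lt_of_lt_of_le one_pos (le_max_right _ _)
  obtain ⟨L, hL0, hLip⟩ := hA1.1 R hRpos
  set K := M * L with hKdef
  have hK0 : (0:ℝ) ≤ K := mul_nonneg hMpos.le hL0
  set E := Real.exp (K * h) with hEdef
  have hEpos : (0:ℝ) < E := Real.exp_pos _
  set κ := ε / (2 * (M * (h + 1) * E)) with hκdef
  have hκpos : (0:ℝ) < κ := by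
    apply div_pos hε; positivity
  -- continuity of f 0 at 0
  obtain ⟨δ₁, hδ₁pos, hδ₁⟩ := Metric.continuousAt_iff.1 (hA1.2.1 0).continuousAt κ hκpos
  set δ := min (min 1 (δ₁ / 2)) (ε / (2 * M * E)) with hδdef
  have hδpos : (0:ℝ) < δ :=
    lt_min (lt_min one_pos (half_pos hδ₁pos)) (by positivity)
  have hδ1 : δ ≤ 1 := le_trans (min_le_left _ _) (min_le_left _ _)
  have hδδ₁ : δ < δ₁ := lt_of_le_of_lt (le_trans (min_le_left _ _) (min_le_right _ _))
    (by linarith)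
  refine ⟨δ, hδpos, ?_⟩
  intro t ht x hx u hu hun
  -- pointwise bound on the input
  have hus : ∀ s : ℝ, 0 ≤ s → ‖u s‖ ≤ pcNorm u := by
    intro s hs
    obtain ⟨C, hC⟩ := hu.1
    have hbdd : BddAbove (range fun t : Ici (0:ℝ) => ‖u t.1‖) :=
      ⟨C, by rintro y ⟨τ, rfl⟩; exact hC τ.1 τ.2⟩
    exact le_ciSup hbdd (⟨s, hs⟩ : Ici (0:ℝ))
  have hf0 : ∀ s : ℝ, 0 ≤ s → ‖f 0 (u s)‖ ≤ κ := by
    intro s hs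
    have h1 : ‖u s‖ < δ₁ := lt_of_le_of_lt ((hus s hs).trans hun) hδδ₁
    have := hδ₁ (show dist (u s) 0 < δ₁ by simpa [dist_eq_norm] using h1)
    rw [hA1.2.2, dist_eq_norm, sub_zero] at this
    exact this.le
  -- BRS bound
  have hφR : ∀ s ∈ Icc (0:ℝ) h, ‖φ s x u‖ ≤ R := fun s hs =>
    (hM₁ x (hx.trans hδ1) u hu (hun.trans hδ1) s hs).trans (le_max_left _ _)
  -- the norm of the trajectory, as a globally continuous function
  set ψ : ℝ → ℝ := fun s => ‖φ (max s 0) x u‖ with hψdef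
  have hφc := (hφ x u hu).2
  have hc : Continuous ψ := by
    apply Continuous.norm
    exact hφc.comp_continuous (continuous_id.max continuous_const)
      (fun s => le_max_right s 0)
  have hψeq : ∀ s : ℝ, 0 ≤ s → ψ s = ‖φ s x u‖ := by
    intro s hs; simp [hψdef, max_eq_left hs]
  -- the integral inequality
  have hb : ∀ τ ∈ Icc (0:ℝ) h, ψ τ ≤ (M * δ + M * κ * h) + K * ∫ s in (0:ℝ)..τ, ψ s := by
    intro τ hτ
    have heq := (hφ x u hu).1 τ hτ.1
    have hTx : ‖Tg.T τ x‖ ≤ M * δ :=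
      (hTle τ hτ _).trans (mul_le_mul_of_nonneg_left hx hMpos.le)
    have hIb : ‖∫ s in (0:ℝ)..τ, Tg.T (τ - s) (f (φ s x u) (u s))‖
        ≤ |∫ s in (0:ℝ)..τ, (K * ψ s + M * κ)| := by
      apply intervalIntegral.norm_integral_le_abs_of_norm_le
      · filter_upwards [MeasureTheory.ae_restrict_mem measurableSet_uIoc] with s hs
        rw [uIoc_of_le hτ.1] at hs
        have hsh : s ∈ Icc (0:ℝ) h := ⟨hs.1.le, hs.2.trans hτ.2⟩
        have hts : τ - s ∈ Icc (0:ℝ) h := ⟨by linarith [hs.2], by linarith [hs.1, hτ.2]⟩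
        have hfb : ‖f (φ s x u) (u s)‖ ≤ L * ψ s + κ := by
          have h1 : ‖f (φ s x u) (u s) - f 0 (u s)‖ ≤ L * ‖φ s x u - 0‖ :=
            hLip (φ s x u) 0 (hφR s hsh) (by simp [hRpos.le]) (u s)
          rw [sub_zero] at h1
          calc ‖f (φ s x u) (u s)‖
              ≤ ‖f (φ s x u) (u s) - f 0 (u s)‖ + ‖f 0 (u s)‖ := by
                simpa using norm_add_le (f (φ s x u) (u s) - f 0 (u s)) (f 0 (u s))
          _ ≤ L * ‖φ s x u‖ + κ := add_le_add h1 (hf0 s hs.1.le)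
          _ = L * ψ s + κ := by rw [hψeq s hs.1.le]
        calc ‖Tg.T (τ - s) (f (φ s x u) (u s))‖ ≤ M * ‖f (φ s x u) (u s)‖ :=
              hTle _ hts _
        _ ≤ M * (L * ψ s + κ) := mul_le_mul_of_nonneg_left hfb hMpos.le
        _ = K * ψ s + M * κ := by rw [hKdef]; ring
      · exact ((continuous_const.mul hc).add continuous_const).intervalIntegrable 0 τ
    have hψnn : ∀ s, 0 ≤ ψ s := fun s => norm_nonneg _
    have hIval : ∫ s in (0:ℝ)..τ, (K * ψ s + M * κ)
        = K * (∫ s in (0:ℝ)..τ, ψ s) + M * κ * τ := by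
      rw [intervalIntegral.integral_add (f := fun s => K * ψ s) ((continuous_const.mul hc).intervalIntegrable 0 τ)
        intervalIntegrable_const, intervalIntegral.integral_const_mul,
        intervalIntegral.integral_const, smul_eq_mul]
      ring
    have hInn : (0:ℝ) ≤ ∫ s in (0:ℝ)..τ, ψ s :=
      intervalIntegral.integral_nonneg hτ.1 (fun s _ => hψnn s)
    have habs : |∫ s in (0:ℝ)..τ, (K * ψ s + M * κ)|
        = K * (∫ s in (0:ℝ)..τ, ψ s) + M * κ * τ := by
      rw [hIval]
      exact abs_of_nonneg (add_nonneg (mul_nonneg hK0 hInn)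
        (mul_nonneg (mul_nonneg hMpos.le hκpos.le) hτ.1))
    rw [hψeq τ hτ.1, heq]
    calc ‖Tg.T τ x + ∫ s in (0:ℝ)..τ, Tg.T (τ - s) (f (φ s x u) (u s))‖
        ≤ ‖Tg.T τ x‖ + ‖∫ s in (0:ℝ)..τ, Tg.T (τ - s) (f (φ s x u) (u s))‖ := norm_add_le _ _
    _ ≤ M * δ + (K * (∫ s in (0:ℝ)..τ, ψ s) + M * κ * τ) := by
        rw [← habs]; exact add_le_add hTx hIb
    _ ≤ (M * δ + M * κ * h) + K * ∫ s in (0:ℝ)..τ, ψ s := by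
        have : M * κ * τ ≤ M * κ * h :=
          mul_le_mul_of_nonneg_left hτ.2 (mul_nonneg hMpos.le hκpos.le)
        linarith
  -- Grönwall
  have hanum : (0:ℝ) ≤ M * δ + M * κ * h := by positivity
  have hgr := gronwall_int hc (fun s => norm_nonneg _) hanum hK0 hb t ht
  rw [hψeq t ht.1] at hgr
  have hexp : Real.exp (K * t) ≤ E := by
    rw [hEdef]; exact Real.exp_le_exp.2 (mul_le_mul_of_nonneg_left ht.2 hK0)
  have hδε : M * δ * E ≤ ε / 2 := by
    have hd : δ ≤ ε / (2 * M * E) := min_le_right _ _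
    have he : M * E * (ε / (2 * M * E)) = ε / 2 := by field_simp
    nlinarith
  have hκε : M * κ * h * E ≤ ε / 2 := by
    have he : M * κ * h * E = ε * h / (2 * (h + 1)) := by
      rw [hκdef]; field_simp
    rw [he, div_le_div_iff₀ (by linarith) (by norm_num)]
    nlinarith
  calc ‖φ t x u‖ ≤ (M * δ + M * κ * h) * Real.exp (K * t) := hgr
  _ ≤ (M * δ + M * κ * h) * E := mul_le_mul_of_nonneg_left hexp hanum
  _ ≤ ε := by nlinarith
end

section
/- A forward complete control system Σ=(X,𝒰,φ) with equilibrium point 0 has the limit property at zero (0-LIM) and is uniformly stable at zero (0-ULS) if and only if Σ is globally asymptotically stable at zero (0-GAS). -/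
open Set Filter

namespace ControlSystem

variable {X U : Type*} [NormedAddCommGroup X] [NormedSpace ℝ X] [Zero U]

/-- Limit property at zero: `inf_{t ≥ 0} ‖φ(t,x,0)‖ = 0` for every `x`. -/
def ZeroLIM (S : ControlSystem X U) : Prop :=
  ∀ x : X, ∀ ε : ℝ, 0 < ε → ∃ t : ℝ, 0 ≤ t ∧ ‖S.phi t x zeroIn‖ < ε

/-- Uniform stability at zero of the undisturbed system. -/
def ZeroULS (S : ControlSystem X U) : Prop :=
  ∃ σ, ClassKinf σ ∧ ∃ r : ℝ, 0 < r ∧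
    ∀ x : X, ‖x‖ ≤ r → ∀ t : ℝ, 0 ≤ t → ‖S.phi t x zeroIn‖ ≤ σ ‖x‖

/-- Global attractivity at zero of the undisturbed system. -/
def ZeroGATT (S : ControlSystem X U) : Prop :=
  ∀ x : X, Tendsto (fun t : ℝ => ‖S.phi t x zeroIn‖) atTop (nhds 0)

/-- Global asymptotic stability at zero: `0-ULS` together with `0-GATT`. -/
def ZeroGAS (S : ControlSystem X U) : Prop :=
  S.ZeroULS ∧ S.ZeroGATT


/-- A forward complete control system with equilibrium point `0` is 0-LIM and 0-ULS
if and only if it is 0-GAS. -/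
theorem ZeroLIM_and_ZeroULS_iff_ZeroGAS (S : ControlSystem X U)
    (heq : ∀ t : ℝ, 0 ≤ t → S.phi t 0 zeroIn = 0) :
    (S.ZeroLIM ∧ S.ZeroULS) ↔ S.ZeroGAS := by
  constructor
  · rintro ⟨hlim, huls⟩
    refine ⟨huls, ?_⟩
    intro x
    obtain ⟨σ, ⟨⟨hσc, hσm, hσ0⟩, _⟩, r, hr, hσ⟩ := huls
    rw [Metric.tendsto_atTop]
    intro ε hε
    have hcw : Tendsto σ (nhdsWithin (0:ℝ) (Ici 0)) (nhds 0) := by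
      have h := hσc.continuousWithinAt (self_mem_Ici (a := (0:ℝ)))
      rwa [ContinuousWithinAt, hσ0] at h
    have hmem : {s : ℝ | σ s < ε} ∈ nhdsWithin (0:ℝ) (Ici 0) := hcw (Iio_mem_nhds hε)
    obtain ⟨u, hu, hsub⟩ := mem_nhdsGE_iff_exists_Ico_subset.mp hmem
    have hu' : (0:ℝ) < u := mem_Ioi.mp hu
    set δ := min (u/2) r with hδdef
    have hδpos : 0 < δ := lt_min (by linarith) hr
    have hδε : σ δ < ε :=
      hsub ⟨hδpos.le, lt_of_le_of_lt (min_le_left _ _) (by linarith)⟩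
    obtain ⟨t₀, ht₀, hlt⟩ := hlim x δ hδpos
    refine ⟨t₀, fun t ht => ?_⟩
    have htt : 0 ≤ t - t₀ := by linarith
    have hc := S.cocycle t₀ ht₀ (t - t₀) htt x zeroIn S.zero_mem
    have hz : (fun s => (zeroIn (s + t₀) : U)) = zeroIn := rfl
    rw [hz] at hc
    have ht' : t₀ + (t - t₀) = t := by ring
    rw [ht'] at hc
    have hb : ‖S.phi t x zeroIn‖ ≤ σ ‖S.phi t₀ x zeroIn‖ := by
      rw [← hc]
      exact hσ _ (le_trans hlt.le (le_trans (min_le_right _ _) le_rfl)) _ htt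
    have hmono : σ ‖S.phi t₀ x zeroIn‖ ≤ σ δ :=
      hσm.monotoneOn (norm_nonneg _) hδpos.le hlt.le
    rw [Real.dist_eq, sub_zero, abs_of_nonneg (norm_nonneg _)]
    linarith
  · rintro ⟨huls, hgatt⟩
    refine ⟨?_, huls⟩
    intro x ε hε
    obtain ⟨N, hN⟩ := Metric.tendsto_atTop.mp (hgatt x) ε hε
    refine ⟨max N 0, le_max_right _ _, ?_⟩
    have h := hN (max N 0) (le_max_left _ _)
    rwa [Real.dist_eq, sub_zero, abs_of_nonneg (norm_nonneg _)] at h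

end ControlSystem
end

section
/- Let Σ=(X,𝒰,φ) be a forward complete control system that has the uniform limit property (ULIM), is uniformly stable at zero (0-ULS) and has bounded reachability sets (BRS). Then Σ is uniformly globally asymptotically stable at zero (0-UGAS), i.e., there exists β∈KL such that ‖φ(t,x,0)‖_X ≤ β(‖x‖_X,t) for all x∈X and all t≥0. -/
open Set Filter

open scoped Topology

section MSmooth

noncomputable def msmooth (g : ℝ → ℝ) : ℝ → ℝ := fun r => ∫ s in r..(r+1), g s

lemma msmooth_continuous {g : ℝ → ℝ} (hg : Monotone g) : Continuous (msmooth g) := by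
  have hint : ∀ a b : ℝ, IntervalIntegrable g MeasureTheory.volume a b :=
    fun a b => hg.intervalIntegrable
  have h1 : Continuous fun b => ∫ x in (0:ℝ)..b, g x :=
    intervalIntegral.continuous_primitive hint 0
  have heq : msmooth g = fun r => (∫ x in (0:ℝ)..(r+1), g x) - ∫ x in (0:ℝ)..r, g x := by
    funext r
    rw [msmooth, intervalIntegral.integral_interval_sub_left (hint 0 (r+1)) (hint 0 r)]
  rw [heq]
  exact (h1.comp (continuous_id.add continuous_const)).sub h1

lemma msmooth_mono {g : ℝ → ℝ} (hg : Monotone g) : Monotone (msmooth g) := by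
  intro r₁ r₂ h
  have hc : (0:ℝ) ≤ r₂ - r₁ := by linarith
  have h1 : msmooth g r₁ ≤ ∫ x in r₁..(r₁+1), g (x + (r₂ - r₁)) := by
    apply intervalIntegral.integral_mono_on (by linarith) hg.intervalIntegrable
      (Monotone.intervalIntegrable (fun a b hab => hg (by linarith)))
    intro x _
    exact hg (by linarith)
  have h2 : (∫ x in r₁..(r₁+1), g (x + (r₂ - r₁))) = ∫ x in r₂..(r₂+1), g x := by
    rw [intervalIntegral.integral_comp_add_right g (r₂ - r₁)]
    ring_nf
  rw [msmooth, msmooth]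
  calc ∫ s in r₁..(r₁+1), g s ≤ _ := h1
    _ = _ := h2

lemma le_msmooth {g : ℝ → ℝ} (hg : Monotone g) (r : ℝ) : g r ≤ msmooth g r := by
  have : (∫ _x in r..(r+1), g r) ≤ ∫ s in r..(r+1), g s := by
    apply intervalIntegral.integral_mono_on (by linarith) intervalIntegrable_const
      hg.intervalIntegrable
    intro x hx
    exact hg hx.1
  simpa [msmooth] using this

lemma msmooth_le {g : ℝ → ℝ} (hg : Monotone g) (r : ℝ) : msmooth g r ≤ g (r+1) := by
  have : (∫ s in r..(r+1), g s) ≤ ∫ _x in r..(r+1), g (r+1) := by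
    apply intervalIntegral.integral_mono_on (by linarith) hg.intervalIntegrable
      intervalIntegrable_const
    intro x hx
    exact hg hx.2
  simpa [msmooth] using this

end MSmooth

namespace ControlSystem

variable {X U : Type*} [NormedAddCommGroup X] [NormedSpace ℝ X] [Zero U]

/-- Bounded reachability sets. -/
def BRS (S : ControlSystem X U) : Prop :=
  ∀ C : ℝ, 0 < C → ∀ τ : ℝ, 0 < τ → ∃ M : ℝ,
    ∀ x : X, ‖x‖ ≤ C → ∀ u ∈ S.inputs, S.Unorm u ≤ C → ∀ t ∈ Icc (0:ℝ) τ,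
      ‖S.phi t x u‖ ≤ M


/-- If a forward complete control system is ULIM, 0-ULS and BRS, then the undisturbed
system is uniformly globally asymptotically stable at zero (0-UGAS). -/
theorem ZeroUGAS_of_ULIM_ZeroULS_BRS (S : ControlSystem X U)
    (h1 : S.ULIM) (h2 : S.ZeroULS) (h3 : S.BRS) :
    ∃ β : ℝ → ℝ → ℝ, ClassKL β ∧
      ∀ x : X, ∀ t : ℝ, 0 ≤ t → ‖S.phi t x zeroIn‖ ≤ β ‖x‖ t := by
  classical
  obtain ⟨γ, hγK, hULIM⟩ := h1
  obtain ⟨σ, hσK, r₀, hr₀, hULS⟩ := h2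
  have hσcont : ContinuousOn σ (Ici 0) := hσK.1.1
  have hσmono : StrictMonoOn σ (Ici 0) := hσK.1.2.1
  have hσ0 : σ 0 = 0 := hσK.1.2.2
  have hσnn : ∀ r : ℝ, 0 ≤ r → 0 ≤ σ r := by
    intro r hr
    rcases eq_or_lt_of_le hr with h | h
    · rw [← h, hσ0]
    · rw [← hσ0]
      exact (hσmono (Set.mem_Ici.mpr le_rfl) h.le h).le
  have hσpos : ∀ r : ℝ, 0 < r → 0 < σ r := by
    intro r hr
    rw [← hσ0]
    exact hσmono (Set.mem_Ici.mpr le_rfl) hr.le hr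
  have hσmono' : MonotoneOn σ (Ici 0) := hσmono.monotoneOn
  have hUz : S.Unorm (zeroIn : ℝ → U) = 0 := S.Unorm_zero
  have hz : (zeroIn : ℝ → U) ∈ S.inputs := S.zero_mem
  have hγ0 : γ 0 = 0 := by
    rcases hγK with h | h
    · exact h.2.2
    · exact h 0 le_rfl
  -- the reachability consequence of ULIM for the zero input
  have reach : ∀ ε : ℝ, 0 < ε → ∀ R : ℝ, 0 < R → ∃ τ : ℝ, 0 ≤ τ ∧
      ∀ x : X, ‖x‖ ≤ R → ∃ t, 0 ≤ t ∧ t ≤ τ ∧ ‖S.phi t x zeroIn‖ ≤ ε := by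
    intro ε hε R hR
    obtain ⟨τ, hτ, h⟩ := hULIM ε hε R hR
    refine ⟨τ, hτ, fun x hx => ?_⟩
    obtain ⟨t, ht, hb⟩ := h x hx zeroIn hz
    refine ⟨t, ht.1, ht.2, ?_⟩
    rwa [hUz, hγ0, add_zero] at hb
  -- once the trajectory is in the small ball, it stays small
  have tail : ∀ x : X, ∀ t₁ t₂ : ℝ, 0 ≤ t₁ → t₁ ≤ t₂ → ‖S.phi t₁ x zeroIn‖ ≤ r₀ →
      ‖S.phi t₂ x zeroIn‖ ≤ σ ‖S.phi t₁ x zeroIn‖ := by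
    intro x t₁ t₂ ht1 h12 hr
    have hc := S.cocycle t₁ ht1 (t₂ - t₁) (by linarith) x zeroIn hz
    have hsh : (fun s : ℝ => (zeroIn : ℝ → U) (s + t₁)) = zeroIn := rfl
    rw [hsh] at hc
    have hteq : t₁ + (t₂ - t₁) = t₂ := by ring
    rw [hteq] at hc
    rw [← hc]
    exact hULS _ hr _ (by linarith)
  -- Lemma A : uniform boundedness of trajectories
  have lemA : ∀ R : ℝ, 0 < R → ∃ M : ℝ, 0 ≤ M ∧
      ∀ x : X, ‖x‖ ≤ R → ∀ s : ℝ, 0 ≤ s → ‖S.phi s x zeroIn‖ ≤ M := by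
    intro R hR
    obtain ⟨τ, hτ, hre⟩ := reach r₀ hr₀ R hR
    obtain ⟨M₁, hM₁⟩ := h3 R hR (τ + 1) (by linarith)
    have hM₁0 : 0 ≤ M₁ := by
      have := hM₁ 0 (by simpa using hR.le) zeroIn hz (by rw [hUz]; exact hR.le) 0
        ⟨le_rfl, by linarith⟩
      rw [S.identity, norm_zero] at this
      exact this
    refine ⟨max M₁ (σ r₀), le_max_of_le_left hM₁0, fun x hx s hs => ?_⟩
    rcases le_or_gt s (τ + 1) with h | h
    · exact le_max_of_le_left (hM₁ x hx zeroIn hz (by rw [hUz]; exact hR.le) s ⟨hs, h⟩)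
    · obtain ⟨t, ht0, htτ, htb⟩ := hre x hx
      have h5 := tail x t s ht0 (by linarith) htb
      exact le_max_of_le_right (h5.trans (hσmono' (norm_nonneg _) hr₀.le htb))
  -- finding small positive points where σ is small
  have smallpt : ∀ ε : ℝ, 0 < ε → ∃ δ : ℝ, σ δ < ε ∧ δ < r₀ ∧ 0 < δ := by
    intro ε hε
    have hcw : Tendsto σ (𝓝[Ici 0] 0) (𝓝 0) := by
      have := hσcont 0 (by simp)
      rw [ContinuousWithinAt, hσ0] at this
      exact this
    have hcw' : Tendsto σ (𝓝[>] (0:ℝ)) (𝓝 0) :=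
      hcw.mono_left (nhdsWithin_mono _ Ioi_subset_Ici_self)
    have h1 : ∀ᶠ r in 𝓝[>] (0:ℝ), σ r < ε := hcw'.eventually (eventually_lt_nhds hε)
    have h2 : ∀ᶠ r in 𝓝[>] (0:ℝ), r < r₀ :=
      eventually_nhdsWithin_of_eventually_nhds (eventually_lt_nhds hr₀)
    have h3' : ∀ᶠ r in 𝓝[>] (0:ℝ), 0 < r := eventually_mem_nhdsWithin
    exact ((h1.and (h2.and h3')).exists).imp (fun δ h => ⟨h.1, h.2.1, h.2.2⟩)
  -- Lemma B : uniform attractivity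
  have lemB : ∀ ε : ℝ, 0 < ε → ∀ R : ℝ, 0 < R → ∃ T : ℝ, 0 ≤ T ∧
      ∀ x : X, ‖x‖ ≤ R → ∀ t : ℝ, T ≤ t → ‖S.phi t x zeroIn‖ ≤ ε := by
    intro ε hε R hR
    obtain ⟨δ, hσδ, hδr₀, hδpos⟩ := smallpt ε hε
    obtain ⟨τ, hτ, hre⟩ := reach δ hδpos R hR
    refine ⟨τ, hτ, fun x hx t ht => ?_⟩
    obtain ⟨t₁, h0, h1τ, hb⟩ := hre x hx
    have h5 := tail x t₁ t h0 (by linarith) (hb.trans hδr₀.le)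
    exact h5.trans ((hσmono' (norm_nonneg _) hδpos.le hb).trans hσδ.le)
  choose MA hMA using lemA
  have hRpos : ∀ r : ℝ, 0 < max r 0 + 1 := fun r => by nlinarith [le_max_right r 0]
  -- the bounding function Bd
  set Q : ℝ → Set ℝ := fun r => insert 0
    {q | ∃ x : X, ∃ s : ℝ, ‖x‖ ≤ max r 0 ∧ 0 ≤ s ∧ q = (1 + ‖x‖) * ‖S.phi s x zeroIn‖}
    with hQdef
  have hQne : ∀ r, (Q r).Nonempty := fun r => ⟨0, mem_insert _ _⟩
  have hQbdd : ∀ r : ℝ, ∀ q ∈ Q r, q ≤ (1 + max r 0) * MA (max r 0 + 1) (hRpos r) := by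
    intro r q hq
    rcases Set.mem_insert_iff.mp hq with h | ⟨x, s, hx, hs, hq⟩
    · subst h
      have h1 := (hMA (max r 0 + 1) (hRpos r)).1
      nlinarith [le_max_right r 0]
    · subst hq
      have h1 : ‖S.phi s x zeroIn‖ ≤ MA (max r 0 + 1) (hRpos r) :=
        (hMA (max r 0 + 1) (hRpos r)).2 x (by linarith) s hs
      have h2 : (0:ℝ) ≤ 1 + ‖x‖ := by positivity
      have h3 : (1:ℝ) + ‖x‖ ≤ 1 + max r 0 := by linarith
      nlinarith [norm_nonneg (S.phi s x zeroIn)]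
  set Bd : ℝ → ℝ := fun r => sSup (Q r) with hBddef
  have hQBdd : ∀ r : ℝ, BddAbove (Q r) := fun r => ⟨_, fun q hq => hQbdd r q hq⟩
  have hBdnn : ∀ r, 0 ≤ Bd r := fun r => le_csSup (hQBdd r) (mem_insert _ _)
  have hBdmono : Monotone Bd := by
    intro a b hab
    apply csSup_le_csSup (hQBdd b) (hQne a)
    intro q hq
    rcases Set.mem_insert_iff.mp hq with h | ⟨x, s, hx, hs, hq⟩
    · exact h ▸ mem_insert _ _
    · exact Set.mem_insert_iff.mpr
        (Or.inr ⟨x, s, hx.trans (max_le_max hab le_rfl), hs, hq⟩)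
  have hBdge : ∀ x : X, ∀ s : ℝ, 0 ≤ s → (1 + ‖x‖) * ‖S.phi s x zeroIn‖ ≤ Bd ‖x‖ :=
    fun x s hs => le_csSup (hQBdd ‖x‖)
      (Set.mem_insert_iff.mpr (Or.inr ⟨x, s, le_max_left _ _, hs, rfl⟩))
  -- its continuous majorant H
  set H : ℝ → ℝ := fun r => msmooth Bd r with hHdef
  have hHcont : Continuous H := msmooth_continuous hBdmono
  have hHmono : Monotone H := msmooth_mono hBdmono
  have hBdH : ∀ r, Bd r ≤ H r := le_msmooth hBdmono
  have hHnn : ∀ r, 0 ≤ H r := fun r => (hBdnn r).trans (hBdH r)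
  -- the cut-off c
  set c : ℝ → ℝ := fun r => min 1 (max (2*r/r₀ - 1) 0) with hcdef
  have hcmono : Monotone c := by
    intro a b hab
    apply min_le_min le_rfl
    apply max_le_max _ le_rfl
    have : 2*a/r₀ ≤ 2*b/r₀ := by
      rw [div_eq_mul_inv, div_eq_mul_inv]
      exact mul_le_mul_of_nonneg_right (by linarith) (by positivity)
    linarith
  have hcnn : ∀ r, 0 ≤ c r := fun r => le_min zero_le_one (le_max_right _ _)
  have hcle1 : ∀ r, c r ≤ 1 := fun r => min_le_left _ _
  have hc0 : c 0 = 0 := by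
    simp only [hcdef]
    norm_num
  have hc1 : ∀ r : ℝ, r₀ ≤ r → c r = 1 := by
    intro r hr
    have h1 : (1:ℝ) ≤ 2*r/r₀ - 1 := by
      rw [le_sub_iff_add_le, le_div_iff₀ hr₀]
      linarith
    simp only [hcdef]
    rw [max_eq_left (by linarith), min_eq_left h1]
  have hccont : Continuous c :=
    continuous_const.min ((((continuous_const.mul continuous_id).div_const r₀).sub
      continuous_const).max continuous_const)
  -- the gain α
  set α : ℝ → ℝ := fun r => Real.sqrt (σ r) + (2 * σ (min (max r 0) r₀) + c r * H r)
    with hαdef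
  have hmin_mem : ∀ r : ℝ, 0 ≤ min (max r 0) r₀ := fun r => le_min (le_max_right _ _) hr₀.le
  have hαnn : ∀ r : ℝ, 0 ≤ α r := by
    intro r
    have h1 := Real.sqrt_nonneg (σ r)
    have h2 := hσnn _ (hmin_mem r)
    have h3 := mul_nonneg (hcnn r) (hHnn r)
    simp only [hαdef]
    linarith
  have hαpos : ∀ r : ℝ, 0 < r → 0 < α r := by
    intro r hr
    have h1 : 0 < Real.sqrt (σ r) := Real.sqrt_pos.mpr (hσpos r hr)
    have h2 := hσnn _ (hmin_mem r)
    have h3 := mul_nonneg (hcnn r) (hHnn r)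
    simp only [hαdef]
    linarith
  have hα0 : α 0 = 0 := by
    simp only [hαdef]
    rw [max_self, min_eq_left hr₀.le, hσ0, hc0, Real.sqrt_zero]
    ring
  have hsqle : ∀ r : ℝ, Real.sqrt (σ r) ≤ α r := by
    intro r
    have h2 := hσnn _ (hmin_mem r)
    have h3 := mul_nonneg (hcnn r) (hHnn r)
    simp only [hαdef]
    linarith
  have hαsm : StrictMonoOn α (Ici 0) := by
    intro a ha b hb hab
    simp only [mem_Ici] at ha hb
    have h1 : Real.sqrt (σ a) < Real.sqrt (σ b) :=
      Real.sqrt_lt_sqrt (hσnn a ha) (hσmono ha hb hab)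
    have h2 : σ (min (max a 0) r₀) ≤ σ (min (max b 0) r₀) :=
      hσmono' (hmin_mem a) (hmin_mem b) (min_le_min (max_le_max hab.le le_rfl) le_rfl)
    have h3 : c a * H a ≤ c b * H b :=
      mul_le_mul (hcmono hab.le) (hHmono hab.le) (hHnn a) ((hcnn b).trans le_rfl)
    simp only [hαdef]
    linarith
  have hαmono : MonotoneOn α (Ici 0) := hαsm.monotoneOn
  have hαcont : ContinuousOn α (Ici 0) := by
    apply ContinuousOn.add
    · exact Real.continuous_sqrt.comp_continuousOn hσcont
    · apply ContinuousOn.add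
      · apply continuousOn_const.mul
        have hcm : Continuous (fun r : ℝ => min (max r 0) r₀) :=
          (continuous_id.max continuous_const).min continuous_const
        exact hσcont.comp hcm.continuousOn (fun r _ => hmin_mem r)
      · exact (hccont.mul hHcont).continuousOn
  -- the global bound by α
  have hGB : ∀ x : X, ∀ s : ℝ, 0 ≤ s → ‖S.phi s x zeroIn‖ ≤ α ‖x‖ := by
    intro x s hs
    rcases le_or_gt ‖x‖ r₀ with h | h
    · have h1 : ‖S.phi s x zeroIn‖ ≤ σ ‖x‖ := hULS x h s hs
      have h2 : min (max ‖x‖ 0) r₀ = ‖x‖ := by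
        rw [max_eq_left (norm_nonneg x), min_eq_left h]
      have h3 : 0 ≤ c ‖x‖ * H ‖x‖ := mul_nonneg (hcnn _) (hHnn _)
      have h4 : 0 ≤ σ ‖x‖ := hσnn _ (norm_nonneg x)
      have h5 := Real.sqrt_nonneg (σ ‖x‖)
      simp only [hαdef, h2]
      linarith
    · have h1 : (1 + ‖x‖) * ‖S.phi s x zeroIn‖ ≤ Bd ‖x‖ := hBdge x s hs
      have h2 : c ‖x‖ = 1 := hc1 _ h.le
      have h3 := hBdH ‖x‖
      have h4 := hσnn _ (hmin_mem ‖x‖)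
      have h5 := Real.sqrt_nonneg (σ ‖x‖)
      have h6 := norm_nonneg (S.phi s x zeroIn)
      have h7 := norm_nonneg x
      simp only [hαdef, h2, one_mul]
      nlinarith
  -- the key decay estimate
  have hKey : ∀ ε : ℝ, 0 < ε → ∃ T : ℝ, 0 ≤ T ∧
      ∀ x : X, x ≠ 0 → ∀ s : ℝ, T ≤ s → ‖S.phi s x zeroIn‖ ≤ ε * α ‖x‖ := by
    intro ε hε
    obtain ⟨δ, hσδ, hδr₀, hδpos⟩ := smallpt (ε^2) (by positivity)
    set R := max r₀ (1/ε) with hRdef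
    obtain ⟨T, hT0, hT⟩ := lemB (ε * α δ) (mul_pos hε (hαpos δ hδpos)) R
      (lt_of_lt_of_le hr₀ (le_max_left _ _))
    refine ⟨T, hT0, fun x hx s hsT => ?_⟩
    have hs0 : 0 ≤ s := hT0.trans hsT
    have hxpos : 0 < ‖x‖ := norm_pos_iff.mpr hx
    rcases le_or_gt ‖x‖ δ with hcase | hcase
    · -- small initial state
      have h1 : ‖S.phi s x zeroIn‖ ≤ σ ‖x‖ := hULS x (hcase.trans hδr₀.le) s hs0
      have h2 : Real.sqrt (σ ‖x‖) ≤ ε := by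
        calc Real.sqrt (σ ‖x‖) ≤ Real.sqrt (σ δ) :=
              Real.sqrt_le_sqrt (hσmono' (norm_nonneg x) hδpos.le hcase)
          _ ≤ Real.sqrt (ε^2) := Real.sqrt_le_sqrt hσδ.le
          _ = ε := Real.sqrt_sq hε.le
      have h3 : σ ‖x‖ = Real.sqrt (σ ‖x‖) * Real.sqrt (σ ‖x‖) :=
        (Real.mul_self_sqrt (hσnn _ (norm_nonneg x))).symm
      calc ‖S.phi s x zeroIn‖ ≤ σ ‖x‖ := h1
        _ = Real.sqrt (σ ‖x‖) * Real.sqrt (σ ‖x‖) := h3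
        _ ≤ ε * α ‖x‖ :=
            mul_le_mul h2 (hsqle ‖x‖) (Real.sqrt_nonneg _) hε.le
    rcases le_or_gt ‖x‖ R with hcase2 | hcase2
    · -- middle range
      have h1 := hT x hcase2 s hsT
      have h2 : α δ ≤ α ‖x‖ := hαmono hδpos.le (norm_nonneg x) hcase.le
      calc ‖S.phi s x zeroIn‖ ≤ ε * α δ := h1
        _ ≤ ε * α ‖x‖ := mul_le_mul_of_nonneg_left h2 hε.le
    · -- large initial state
      have hr₀x : r₀ ≤ ‖x‖ := (le_max_left r₀ (1/ε)).trans hcase2.le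
      have h1 : (1 + ‖x‖) * ‖S.phi s x zeroIn‖ ≤ α ‖x‖ := by
        have ha : (1 + ‖x‖) * ‖S.phi s x zeroIn‖ ≤ Bd ‖x‖ := hBdge x s hs0
        have hb : Bd ‖x‖ ≤ H ‖x‖ := hBdH _
        have hc2 : c ‖x‖ = 1 := hc1 _ hr₀x
        have h4 := hσnn _ (hmin_mem ‖x‖)
        have h5 := Real.sqrt_nonneg (σ ‖x‖)
        simp only [hαdef, hc2, one_mul]
        linarith
      have h2 : 1/ε ≤ ‖x‖ := (le_max_right r₀ (1/ε)).trans hcase2.le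
      have h3 : 1 ≤ ε * ‖x‖ := by
        rw [div_le_iff₀ hε] at h2
        linarith
      have h6 := norm_nonneg (S.phi s x zeroIn)
      nlinarith [mul_le_mul_of_nonneg_left h1 hε.le,
        mul_nonneg (sub_nonneg.mpr h3) h6, mul_nonneg hε.le h6]
  -- the decay profile ρ
  set Sρ : ℝ → Set ℝ := fun t => insert 0
    {q | ∃ x : X, x ≠ 0 ∧ ∃ s : ℝ, max t 0 ≤ s ∧ q = ‖S.phi s x zeroIn‖ / α ‖x‖}
    with hSρdef
  have hSρbdd : ∀ t : ℝ, ∀ q ∈ Sρ t, q ≤ 1 := by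
    intro t q hq
    rcases Set.mem_insert_iff.mp hq with h | ⟨x, hx, s, hs, hq⟩
    · exact h ▸ zero_le_one
    · subst hq
      rw [div_le_one (hαpos _ (norm_pos_iff.mpr hx))]
      exact hGB x s ((le_max_right t 0).trans hs)
  have hSρB : ∀ t : ℝ, BddAbove (Sρ t) := fun t => ⟨1, fun q hq => hSρbdd t q hq⟩
  have hSρne : ∀ t, (Sρ t).Nonempty := fun t => ⟨0, mem_insert _ _⟩
  set ρ : ℝ → ℝ := fun t => sSup (Sρ t) with hρdef
  have hρnn : ∀ t, 0 ≤ ρ t := fun t => le_csSup (hSρB t) (mem_insert _ _)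
  have hρanti : Antitone ρ := by
    intro a b hab
    apply csSup_le_csSup (hSρB a) (hSρne b)
    intro q hq
    rcases Set.mem_insert_iff.mp hq with h | ⟨x, hx, s, hs, hq⟩
    · exact h ▸ mem_insert _ _
    · exact Set.mem_insert_iff.mpr
        (Or.inr ⟨x, hx, s, (max_le_max hab le_rfl).trans hs, hq⟩)
  have hρle : ∀ ε : ℝ, 0 < ε → ∃ T : ℝ, 0 ≤ T ∧ ∀ t : ℝ, T ≤ t → ρ t ≤ ε := by
    intro ε hε
    obtain ⟨T, hT0, hT⟩ := hKey ε hε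
    refine ⟨T, hT0, fun t ht => ?_⟩
    apply Real.sSup_le ?_ hε.le
    intro q hq
    rcases Set.mem_insert_iff.mp hq with h | ⟨x, hx, s, hs, hq⟩
    · exact h ▸ hε.le
    · subst hq
      rw [div_le_iff₀ (hαpos _ (norm_pos_iff.mpr hx))]
      have := hT x hx s (ht.trans ((le_max_left t 0).trans hs))
      linarith [this]
  have hρtend : Tendsto ρ atTop (𝓝 0) := by
    rw [Metric.tendsto_atTop]
    intro ε hε
    obtain ⟨T, hT0, hT⟩ := hρle (ε/2) (by linarith)
    refine ⟨T, fun t ht => ?_⟩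
    rw [Real.dist_eq, sub_zero, abs_of_nonneg (hρnn t)]
    linarith [hT t ht]
  -- the smoothed decay profile
  have hρnegmono : Monotone (fun s : ℝ => ρ (-s)) := fun a b hab => hρanti (neg_le_neg hab)
  set ρb : ℝ → ℝ := fun t => msmooth (fun s : ℝ => ρ (-s)) (-t) with hρbdef
  have hρbcont : Continuous ρb := (msmooth_continuous hρnegmono).comp continuous_neg
  have hρbanti : Antitone ρb := fun a b hab => msmooth_mono hρnegmono (neg_le_neg hab)
  have hρρb : ∀ t, ρ t ≤ ρb t := by
    intro t
    have h := le_msmooth hρnegmono (-t)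
    simpa using h
  have hρbub : ∀ t, ρb t ≤ ρ (t - 1) := by
    intro t
    have h := msmooth_le hρnegmono (-t)
    have he : -(-t + 1) = t - 1 := by ring
    simpa [he] using h
  have hρbnn : ∀ t, 0 ≤ ρb t := fun t => (hρnn t).trans (hρρb t)
  have hρbtend : Tendsto ρb atTop (𝓝 0) := by
    have h1 : Tendsto (fun t : ℝ => ρ (t - 1)) atTop (𝓝 0) :=
      hρtend.comp (tendsto_atTop_add_const_right atTop (-1) tendsto_id)
    exact tendsto_of_tendsto_of_tendsto_of_le_of_le tendsto_const_nhds h1 hρbnn hρbub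
  -- assembling β
  refine ⟨fun r t => α r * (ρb t + Real.exp (-t)), ⟨?_, ?_, ?_⟩, ?_⟩
  · -- joint continuity
    have h1 : ContinuousOn (fun p : ℝ × ℝ => α p.1) (Ici 0 ×ˢ Ici 0) :=
      hαcont.comp continuous_fst.continuousOn (fun p hp => hp.1)
    have h2 : Continuous (fun p : ℝ × ℝ => ρb p.2 + Real.exp (-p.2)) :=
      (hρbcont.comp continuous_snd).add ((Real.continuous_exp).comp continuous_snd.neg)
    exact h1.mul h2.continuousOn
  · -- sections in r are of class K
    intro t ht
    have hpos : 0 < ρb t + Real.exp (-t) :=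
      add_pos_of_nonneg_of_pos (hρbnn t) (Real.exp_pos _)
    refine ⟨hαcont.mul continuousOn_const, ?_, ?_⟩
    · intro a ha b hb hab
      exact mul_lt_mul_of_pos_right (hαsm ha hb hab) hpos
    · simp only [hα0, zero_mul]
  · -- sections in t
    intro r hr
    constructor
    · intro a _ b _ hab
      have h1 : ρb b + Real.exp (-b) < ρb a + Real.exp (-a) :=
        add_lt_add_of_le_of_lt (hρbanti hab.le) (Real.exp_lt_exp.mpr (by linarith))
      exact mul_lt_mul_of_pos_left h1 (hαpos r hr)
    · have h1 : Tendsto (fun t : ℝ => ρb t + Real.exp (-t)) atTop (𝓝 (0+0)) :=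
        hρbtend.add Real.tendsto_exp_neg_atTop_nhds_zero
      have h2 := h1.const_mul (α r)
      simpa using h2
  · -- the UGAS estimate
    intro x t ht
    by_cases hx : x = 0
    · subst hx
      have h1 : ‖S.phi t 0 zeroIn‖ ≤ σ ‖(0:X)‖ := hULS 0 (by simp [hr₀.le]) t ht
      rw [norm_zero, hσ0] at h1
      simp only [norm_zero, hα0, zero_mul]
      exact h1
    · have hmem : ‖S.phi t x zeroIn‖ / α ‖x‖ ∈ Sρ t :=
        Set.mem_insert_iff.mpr (Or.inr ⟨x, hx, t, le_of_eq (max_eq_left ht), rfl⟩)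
      have h1 : ‖S.phi t x zeroIn‖ / α ‖x‖ ≤ ρ t := le_csSup (hSρB t) hmem
      have h2 : ρ t ≤ ρb t + Real.exp (-t) :=
        (hρρb t).trans (le_add_of_nonneg_right (Real.exp_pos _).le)
      have hpos := hαpos ‖x‖ (norm_pos_iff.mpr hx)
      rw [div_le_iff₀ hpos] at h1
      calc ‖S.phi t x zeroIn‖ ≤ ρ t * α ‖x‖ := h1
        _ ≤ (ρb t + Real.exp (-t)) * α ‖x‖ := mul_le_mul_of_nonneg_right h2 hpos.le
        _ = α ‖x‖ * (ρb t + Real.exp (-t)) := mul_comm _ _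


end ControlSystem
end
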